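/- In the generalized corona product G∘̃(H_1,...,H_n), a vertex v_p of H_i and a vertex v_q of H_j (i ≠ j) are antipodal (at distance equal to the diameter of the product) if and only if u_i and u_j are antipodal in G. -/

import Mathlib

open SimpleGraph

/-- A strong geodetic set: an assignment of a (unique) geodesic to each pair of
vertices of `S` such that every vertex lies on one of the assigned geodesics. -/
def IsStrongGeodeticSet {V : Type*} (G : SimpleGraph V) (S : Set V) : Prop :=
  ∃ f : ∀ u v : V, u ∈ S → v ∈ S → G.Walk u v,
    (∀ u v hu hv, (f u v hu hv).length = G.dist u v) ∧
    (∀ x : V, ∃ u v hu hv, x ∈ (f u v hu hv).support)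

/-- A strong 2-geodetic set: as above, but all assigned geodesics have length ≤ 2. -/
def IsStrong2GeodeticSet {V : Type*} (G : SimpleGraph V) (S : Set V) : Prop :=
  ∃ f : ∀ u v : V, u ∈ S → v ∈ S → G.Walk u v,
    (∀ u v hu hv, (f u v hu hv).length = G.dist u v ∧ (f u v hu hv).length ≤ 2) ∧
    (∀ x : V, ∃ u v hu hv, x ∈ (f u v hu hv).support)

/-- The strong geodetic number `Sg(G)`. -/
noncomputable def strongGeodeticNumber (V : Type*) [Fintype V] (G : SimpleGraph V) : ℕ :=
  sInf {n | ∃ S : Finset V, S.card = n ∧ IsStrongGeodeticSet G ↑S}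

/-- The strong 2-geodetic number `Sg'(G)`. -/
noncomputable def strong2GeodeticNumber (V : Type*) [Fintype V] (G : SimpleGraph V) : ℕ :=
  sInf {n | ∃ S : Finset V, S.card = n ∧ IsStrong2GeodeticSet G ↑S}

/-- Adjacency generator for the generalized corona product. -/
def genCoronaRel {α : Type*} {β : α → Type*} (G : SimpleGraph α)
    (H : ∀ i, SimpleGraph (β i)) :
    (α ⊕ (Σ i, β i)) → (α ⊕ (Σ i, β i)) → Prop
  | Sum.inl a, Sum.inl b => G.Adj a b
  | Sum.inl a, Sum.inr x => a = x.1
  | Sum.inr x, Sum.inl a => a = x.1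
  | Sum.inr x, Sum.inr y => ∃ h : x.1 = y.1, (H y.1).Adj (h ▸ x.2) y.2

/-- The generalized corona product `G ∘̃ (H₁, …, Hₙ)`: the `i`-th vertex of `G`
is joined to every vertex of `H i`. -/
def genCorona {α : Type*} {β : α → Type*} (G : SimpleGraph α)
    (H : ∀ i, SimpleGraph (β i)) : SimpleGraph (α ⊕ (Σ i, β i)) :=
  SimpleGraph.fromRel (genCoronaRel G H)

/-- Adjacency generator for the generalized edge corona product. -/
def genEdgeCoronaRel {α : Type*} (G : SimpleGraph α) {β : G.edgeSet → Type*}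
    (H : ∀ e, SimpleGraph (β e)) :
    (α ⊕ (Σ e, β e)) → (α ⊕ (Σ e, β e)) → Prop
  | Sum.inl a, Sum.inl b => G.Adj a b
  | Sum.inl a, Sum.inr x => a ∈ (x.1 : Sym2 α)
  | Sum.inr x, Sum.inl a => a ∈ (x.1 : Sym2 α)
  | Sum.inr x, Sum.inr y => ∃ h : x.1 = y.1, (H y.1).Adj (h ▸ x.2) y.2

/-- The generalized edge corona product `G ⋄̃ (H_e)_{e ∈ E(G)}`: both endpoints of
the edge `e` of `G` are joined to every vertex of `H e`. -/
def genEdgeCorona {α : Type*} (G : SimpleGraph α) {β : G.edgeSet → Type*}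
    (H : ∀ e, SimpleGraph (β e)) : SimpleGraph (α ⊕ (Σ e, β e)) :=
  SimpleGraph.fromRel (genEdgeCoronaRel G H)

/-- Adjacency generator for the generalized neighborhood corona product. -/
def genNbrCoronaRel {α : Type*} {β : α → Type*} (G : SimpleGraph α)
    (H : ∀ i, SimpleGraph (β i)) :
    (α ⊕ (Σ i, β i)) → (α ⊕ (Σ i, β i)) → Prop
  | Sum.inl a, Sum.inl b => G.Adj a b
  | Sum.inl a, Sum.inr x => G.Adj a x.1
  | Sum.inr x, Sum.inl a => G.Adj a x.1
  | Sum.inr x, Sum.inr y => ∃ h : x.1 = y.1, (H y.1).Adj (h ▸ x.2) y.2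

/-- The generalized neighborhood corona product `G ⋆̃ (H₁, …, Hₙ)`: every vertex
of `H i` is joined to every `G`-neighbor of the `i`-th vertex of `G`. -/
def genNbrCorona {α : Type*} {β : α → Type*} (G : SimpleGraph α)
    (H : ∀ i, SimpleGraph (β i)) : SimpleGraph (α ⊕ (Σ i, β i)) :=
  SimpleGraph.fromRel (genNbrCoronaRel G H)

/-- Adjacency generator for the (ordinary) corona product. -/
def coronaRel {α β : Type*} (G : SimpleGraph α) (H : SimpleGraph β) :
    (α ⊕ α × β) → (α ⊕ α × β) → Prop
  | Sum.inl a, Sum.inl b => G.Adj a b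
  | Sum.inl a, Sum.inr x => a = x.1
  | Sum.inr x, Sum.inl a => a = x.1
  | Sum.inr x, Sum.inr y => x.1 = y.1 ∧ H.Adj x.2 y.2

/-- The corona product `G ∘ H`: the `i`-th vertex of `G` is joined to every
vertex of the `i`-th copy of `H`. -/
def corona {α β : Type*} (G : SimpleGraph α) (H : SimpleGraph β) :
    SimpleGraph (α ⊕ α × β) :=
  SimpleGraph.fromRel (coronaRel G H)

/-- Vertex type of the iterated corona graphs `G^(m)`. -/
def coronaIterType (α : Type u) : ℕ → Type u
  | 0 => α
  | m + 1 => coronaIterType α m ⊕ coronaIterType α m × α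

/-- The corona graph sequence `G^(0) = G`, `G^(m+1) = G^(m) ∘ G`. -/
def coronaIter {α : Type u} (G : SimpleGraph α) : ∀ m, SimpleGraph (coronaIterType α m)
  | 0 => G
  | m + 1 => corona (coronaIter G m) G

/-- Fintype instances for the iterated corona vertex types. -/
def coronaIterFintype (α : Type u) [Fintype α] [DecidableEq α] :
    ∀ m, Fintype (coronaIterType α m)
  | 0 => inferInstanceAs (Fintype α)
  | m + 1 =>
      letI := coronaIterFintype α m
      inferInstanceAs (Fintype (coronaIterType α m ⊕ coronaIterType α m × α))
section GenCoronaAux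

open Sum

variable {α : Type} {β : α → Type} {G : SimpleGraph α} {H : ∀ i, SimpleGraph (β i)}

lemma genCorona_adj_inl_inl {a b : α} (h : G.Adj a b) :
    (genCorona G H).Adj (Sum.inl a) (Sum.inl b) :=
  ⟨by simpa using h.ne, Or.inl h⟩

lemma genCorona_adj_inl_inr (k : α) (x : β k) :
    (genCorona G H).Adj (Sum.inl k) (Sum.inr ⟨k, x⟩) :=
  ⟨by simp, Or.inl rfl⟩

/-- The embedding of `G` into the generalized corona. -/
def genCoronaHomInl (G : SimpleGraph α) (H : ∀ i, SimpleGraph (β i)) :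
    G →g genCorona G H :=
  ⟨Sum.inl, fun h => genCorona_adj_inl_inl h⟩

lemma genCorona_connected (hG : G.Connected) : (genCorona G H).Connected := by
  have hne : Nonempty α := hG.nonempty
  obtain ⟨a₀⟩ := hne
  have key : ∀ v : α ⊕ (Σ i, β i), (genCorona G H).Reachable v (Sum.inl a₀) := by
    intro v
    have hl : ∀ a : α, (genCorona G H).Reachable (Sum.inl a) (Sum.inl a₀) := fun a =>
      (hG a a₀).map (genCoronaHomInl G H)
    cases v with
    | inl a => exact hl a
    | inr x =>
        exact ((genCorona_adj_inl_inr x.1 x.2).reachable.symm).trans (hl x.1)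
  haveI : Nonempty (α ⊕ (Σ i, β i)) := ⟨Sum.inl a₀⟩
  exact SimpleGraph.Connected.mk fun u v => (key u).trans (key v).symm

open Classical in
/-- Potential function used to lower bound distances to a vertex in copy `j`. -/
noncomputable def genCoronaPot (G : SimpleGraph α) (j : α) : (α ⊕ (Σ i, β i)) → ℕ
  | Sum.inl a => G.dist a j + 1
  | Sum.inr x => G.dist x.1 j + (if x.1 = j then 0 else 2)

lemma pot_le_of_walk {V : Type*} {Γ : SimpleGraph V} (f : V → ℕ)
    (hf : ∀ u v, Γ.Adj u v → f u ≤ f v + 1) {u v : V} (w : Γ.Walk u v) :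
    f u ≤ f v + w.length := by
  induction w with
  | nil => simp
  | @cons a b c h p ih =>
      have h1 := hf _ _ h
      simp only [SimpleGraph.Walk.length_cons]
      omega

lemma genCoronaPot_adj (hG : G.Connected) (j : α) :
    ∀ u v, (genCorona G H).Adj u v →
      genCoronaPot (β := β) G j u ≤ genCoronaPot (β := β) G j v + 1 := by
  have hGdist : ∀ a b : α, G.Adj a b → G.dist a j ≤ G.dist b j + 1 := by
    intro a b hab
    have h1 : G.dist a j ≤ G.dist a b + G.dist b j := hG.dist_triangle
    have h2 : G.dist a b = 1 := SimpleGraph.dist_eq_one_iff_adj.mpr hab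
    omega
  intro u v huv
  obtain ⟨hne, h | h⟩ := huv
  all_goals cases u with
  | inl a =>
      cases v with
      | inl b =>
          have hab : G.Adj a b := by
            first
            | exact h
            | exact (show G.Adj b a from h).symm
          have := hGdist a b hab
          simp only [genCoronaPot]
          omega
      | inr x =>
          have hax : a = x.1 := h
          obtain ⟨k, y⟩ := x
          subst hax
          simp only [genCoronaPot]
          split <;> omega
  | inr x =>
      cases v with
      | inl b =>
          have hbx : b = x.1 := h
          obtain ⟨k, y⟩ := x
          subst hbx
          simp only [genCoronaPot]
          split <;> omega
      | inr y =>
          obtain ⟨k, x⟩ := x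
          obtain ⟨l, y⟩ := y
          obtain ⟨hxy, -⟩ := h
          cases hxy
          simp only [genCoronaPot]
          omega

lemma genCorona_dist_inr_inr (hG : G.Connected) {i j : α} (hij : i ≠ j)
    (p : β i) (q : β j) :
    (genCorona G H).dist (Sum.inr ⟨i, p⟩) (Sum.inr ⟨j, q⟩) = G.dist i j + 2 := by
  have hconn := genCorona_connected (H := H) hG
  have hle : (genCorona G H).dist (Sum.inr ⟨i, p⟩) (Sum.inr ⟨j, q⟩) ≤ G.dist i j + 2 := by
    obtain ⟨wg, hwg⟩ := hG.exists_walk_length_eq_dist i j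
    let w : (genCorona G H).Walk (Sum.inr ⟨i, p⟩) (Sum.inr ⟨j, q⟩) :=
      SimpleGraph.Walk.cons (genCorona_adj_inl_inr i p).symm
        ((wg.map (genCoronaHomInl G H)).concat (genCorona_adj_inl_inr j q))
    have hlen : w.length = G.dist i j + 2 := by
      simp only [w, SimpleGraph.Walk.length_cons, SimpleGraph.Walk.length_concat,
        SimpleGraph.Walk.length_map, hwg]
      erw [SimpleGraph.Walk.length_cons, SimpleGraph.Walk.length_concat,
        SimpleGraph.Walk.length_map, hwg]
    calc (genCorona G H).dist (Sum.inr ⟨i, p⟩) (Sum.inr ⟨j, q⟩) ≤ w.length :=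
          SimpleGraph.dist_le w
      _ = G.dist i j + 2 := hlen
  have hge : G.dist i j + 2 ≤ (genCorona G H).dist (Sum.inr ⟨i, p⟩) (Sum.inr ⟨j, q⟩) := by
    obtain ⟨w, hw⟩ := hconn.exists_walk_length_eq_dist (Sum.inr ⟨i, p⟩) (Sum.inr ⟨j, q⟩)
    have := pot_le_of_walk (genCoronaPot (β := β) G j) (genCoronaPot_adj hG j) w
    simp only [genCoronaPot, if_neg hij, SimpleGraph.dist_self, if_true] at this
    omega
  omega

lemma ediam_ne_top_of_connected {V : Type*} [Finite V] {Γ : SimpleGraph V}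
    (h : Γ.Connected) : Γ.ediam ≠ ⊤ := by
  have : Nonempty V := h.nonempty
  obtain ⟨u, v, huv⟩ := Γ.exists_edist_eq_ediam_of_finite
  rw [← huv]
  exact SimpleGraph.edist_ne_top_iff_reachable.mpr (h u v)

lemma genCorona_diam [Fintype α] [∀ i, Fintype (β i)]
    (hG : G.Connected) (hne : ∀ i, Nonempty (β i))
    {i₀ j₀ : α} (hij : i₀ ≠ j₀) :
    (genCorona G H).diam = G.diam + 2 := by
  have hconn := genCorona_connected (H := H) hG
  have hA : Nonempty α := ⟨i₀⟩
  have hGtop : G.ediam ≠ ⊤ := ediam_ne_top_of_connected hG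
  have hPtop : (genCorona G H).ediam ≠ ⊤ := ediam_ne_top_of_connected hconn
  -- every inl-inl distance is at most G.diam
  have hll : ∀ a b : α, (genCorona G H).dist (Sum.inl a) (Sum.inl b) ≤ G.diam := by
    intro a b
    obtain ⟨wg, hwg⟩ := hG.exists_walk_length_eq_dist a b
    have h1 : (genCorona G H).dist (Sum.inl a) (Sum.inl b) ≤ G.dist a b := by
      calc (genCorona G H).dist (Sum.inl a) (Sum.inl b)
          ≤ (wg.map (genCoronaHomInl G H)).length := SimpleGraph.dist_le _
        _ = G.dist a b := by rw [SimpleGraph.Walk.length_map, hwg]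
    exact h1.trans (SimpleGraph.dist_le_diam hGtop)
  have hlr : ∀ (k : α) (x : β k),
      (genCorona G H).dist (Sum.inl k) (Sum.inr ⟨k, x⟩) ≤ 1 := by
    intro k x
    have := SimpleGraph.dist_le (genCorona_adj_inl_inr (G := G) (H := H) k x).toWalk
    simpa using this
  have upper : (genCorona G H).diam ≤ G.diam + 2 := by
    obtain ⟨u, v, huv⟩ := (genCorona G H).exists_dist_eq_diam
    rw [← huv]
    cases u with
    | inl a =>
        cases v with
        | inl b => exact (hll a b).trans (by omega)
        | inr x =>
            obtain ⟨k, y⟩ := x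
            have := hconn.dist_triangle (u := Sum.inl a) (v := Sum.inl k)
              (w := Sum.inr ⟨k, y⟩)
            have h1 := hll a k
            have h2 := hlr k y
            omega
    | inr x =>
        obtain ⟨k, y⟩ := x
        cases v with
        | inl b =>
            have := hconn.dist_triangle (u := Sum.inr ⟨k, y⟩) (v := Sum.inl k)
              (w := Sum.inl b)
            have h1 := hll k b
            have h2 := hlr k y
            rw [SimpleGraph.dist_comm] at h2
            omega
        | inr z =>
            obtain ⟨l, t⟩ := z
            have t1 := hconn.dist_triangle (u := Sum.inr ⟨k, y⟩) (v := Sum.inl k)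
              (w := Sum.inr ⟨l, t⟩)
            have t2 := hconn.dist_triangle (u := Sum.inl k) (v := Sum.inl l)
              (w := Sum.inr ⟨l, t⟩)
            have h1 := hll k l
            have h2 := hlr k y
            have h3 := hlr l t
            rw [SimpleGraph.dist_comm] at h2
            omega
  have lower : G.diam + 2 ≤ (genCorona G H).diam := by
    obtain ⟨a, b, hab⟩ := G.exists_dist_eq_diam
    have hdpos : 0 < G.diam := by
      have h1 : 0 < G.dist i₀ j₀ := hG.pos_dist_of_ne hij
      have h2 : G.dist i₀ j₀ ≤ G.diam := SimpleGraph.dist_le_diam hGtop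
      omega
    have hab' : a ≠ b := by
      intro h
      subst h
      rw [SimpleGraph.dist_self] at hab
      omega
    obtain ⟨pa⟩ := hne a
    obtain ⟨pb⟩ := hne b
    have := genCorona_dist_inr_inr (H := H) hG hab' pa pb
    have hd : (genCorona G H).dist (Sum.inr ⟨a, pa⟩) (Sum.inr ⟨b, pb⟩)
        ≤ (genCorona G H).diam := SimpleGraph.dist_le_diam hPtop
    omega
  omega

end GenCoronaAux

/-- In the generalized corona, `v_p ∈ H i` and `v_q ∈ H j` (`i ≠ j`) are antipodal
in the product iff `u_i` and `u_j` are antipodal in `G`. -/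
theorem genCorona_antipodal_iff
    {α : Type} {β : α → Type} [Fintype α] [∀ i, Fintype (β i)]
    (G : SimpleGraph α) (H : ∀ i, SimpleGraph (β i))
    (hG : G.Connected) (hne : ∀ i, Nonempty (β i))
    (i j : α) (hij : i ≠ j) (p : β i) (q : β j) :
    (genCorona G H).dist (Sum.inr ⟨i, p⟩) (Sum.inr ⟨j, q⟩) = (genCorona G H).diam ↔
      G.dist i j = G.diam := by
  have h1 := genCorona_dist_inr_inr (H := H) hG hij p q
  have h2 := genCorona_diam (H := H) hG hne hij
  omega
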